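/- In the AI regulation game with quadratic costs, suppose both C0 and C1 satisfy the investment condition, let γ0^A := (δ/2)·C0⁻¹·r, γ1^A := γ0^A + ((1−δ)/2)·C1⁻¹·r, and let β1^A be the β-coordinate of γ1^A. Fix regulation θG = 0 and 0 ≤ θD < β1^A. Suppose there exists a pair (γ0', γ1') with γ0' = (α0', β0'), α0' ≥ 0, β0' ≥ 0, such that γ1' maximizes U_D(γ0', ·) over F(γ0', θD), the β-coordinate of γ1' equals θD (minimal compliance), and U_G(γ0', γ1') > U_G(γ0^A, γ1^A). Then every subgame perfect equilibrium (b, γ0*) under regulation (0, θD) has equilibrium outcome safety equal to θD; in particular the outcome safety is strictly below β1^A, i.e., the regulation backfires. -/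

import Mathlib

open Matrix

/-- The domain specialist's utility
`U_D(γ0, γ1) = (1−δ)·(rα·α1 + rβ·β1) − (γ1−γ0)ᵀ C1 (γ1−γ0)`. -/
noncomputable def UD (c1aa c1ab c1bb rα rβ δ : ℝ) (γ0 γ1 : Fin 2 → ℝ) : ℝ :=
  (1 - δ) * (rα * γ1 0 + rβ * γ1 1)
    - (γ1 - γ0) ⬝ᵥ ((!![c1aa, c1ab; c1ab, c1bb] : Matrix (Fin 2) (Fin 2) ℝ) *ᵥ (γ1 - γ0))

/-- The generalist's utility `U_G(γ0, γ1) = δ·(rα·α1 + rβ·β1) − γ0ᵀ C0 γ0`. -/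
noncomputable def UG (c0aa c0ab c0bb rα rβ δ : ℝ) (γ0 γ1 : Fin 2 → ℝ) : ℝ :=
  δ * (rα * γ1 0 + rβ * γ1 1)
    - γ0 ⬝ᵥ ((!![c0aa, c0ab; c0ab, c0bb] : Matrix (Fin 2) (Fin 2) ℝ) *ᵥ γ0)

/-- Subgame perfect equilibrium under regulation `(θG, θD)`: `b` maps each generalist
strategy to a specialist best response over the regulated feasible set
`F(γ0, θD) = {(α, β) : α ≥ α0, β ≥ max(β0, θD)}`, and `γ0s` maximizes the generalist's
utility over her regulated strategies `{(α, β) : α ≥ 0, β ≥ θG}`. -/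
def IsSPE (c0aa c0ab c0bb c1aa c1ab c1bb rα rβ δ θG θD : ℝ)
    (b : (Fin 2 → ℝ) → (Fin 2 → ℝ)) (γ0s : Fin 2 → ℝ) : Prop :=
  (∀ γ0 : Fin 2 → ℝ,
      (γ0 0 ≤ (b γ0) 0 ∧ max (γ0 1) θD ≤ (b γ0) 1) ∧
      ∀ γ : Fin 2 → ℝ, γ0 0 ≤ γ 0 → max (γ0 1) θD ≤ γ 1 →
        UD c1aa c1ab c1bb rα rβ δ γ0 γ ≤ UD c1aa c1ab c1bb rα rβ δ γ0 (b γ0)) ∧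
  0 ≤ γ0s 0 ∧ θG ≤ γ0s 1 ∧
  ∀ γ0 : Fin 2 → ℝ, 0 ≤ γ0 0 → θG ≤ γ0 1 →
    UG c0aa c0ab c0bb rα rβ δ γ0 (b γ0) ≤ UG c0aa c0ab c0bb rα rβ δ γ0s (b γ0s)

/-- The no-regulation equilibrium strategy of the generalist: `γ0^A = (δ/2)·C0⁻¹·r`. -/
noncomputable def gamma0A (c0aa c0ab c0bb rα rβ δ : ℝ) : Fin 2 → ℝ :=
  (δ / 2) • ((!![c0aa, c0ab; c0ab, c0bb] : Matrix (Fin 2) (Fin 2) ℝ)⁻¹ *ᵥ ![rα, rβ])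

/-- The no-regulation equilibrium outcome: `γ1^A = γ0^A + ((1−δ)/2)·C1⁻¹·r`. -/
noncomputable def gamma1A (c0aa c0ab c0bb c1aa c1ab c1bb rα rβ δ : ℝ) : Fin 2 → ℝ :=
  gamma0A c0aa c0ab c0bb rα rβ δ +
    ((1 - δ) / 2) • ((!![c1aa, c1ab; c1ab, c1bb] : Matrix (Fin 2) (Fin 2) ℝ)⁻¹ *ᵥ ![rα, rβ])

/-- The paper's (one-sided) investment condition on a cost matrix
`!![caa, cab; cab, cbb]`. -/
def InvCond (caa cab cbb rα rβ : ℝ) : Prop :=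
  cab < min (Real.sqrt (caa * cbb)) (min (caa * rβ / rα) (cbb * rα / rβ))

/- ### Auxiliary lemmas -/

lemma UD_eval (c1aa c1ab c1bb rα rβ δ : ℝ) (γ0 γ1 : Fin 2 → ℝ) :
    UD c1aa c1ab c1bb rα rβ δ γ0 γ1 = (1-δ)*(rα*γ1 0 + rβ*γ1 1) -
      (c1aa*(γ1 0-γ0 0)^2 + 2*c1ab*(γ1 0-γ0 0)*(γ1 1-γ0 1) + c1bb*(γ1 1-γ0 1)^2) := by
  simp [UD, Matrix.mulVec, dotProduct, Fin.sum_univ_two]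
  ring

lemma UG_eval (c0aa c0ab c0bb rα rβ δ : ℝ) (γ0 γ1 : Fin 2 → ℝ) :
    UG c0aa c0ab c0bb rα rβ δ γ0 γ1 = δ*(rα*γ1 0 + rβ*γ1 1) -
      (c0aa*(γ0 0)^2 + 2*c0ab*(γ0 0)*(γ0 1) + c0bb*(γ0 1)^2) := by
  simp [UG, Matrix.mulVec, dotProduct, Fin.sum_univ_two]
  ring

lemma invVec (caa cab cbb rα rβ : ℝ) (h : caa*cbb - cab*cab ≠ 0) :
    (!![caa,cab;cab,cbb] : Matrix (Fin 2) (Fin 2) ℝ)⁻¹ *ᵥ ![rα,rβ] =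
      ![(cbb*rα - cab*rβ)/(caa*cbb-cab*cab), (caa*rβ - cab*rα)/(caa*cbb-cab*cab)] := by
  rw [Matrix.inv_def, Matrix.adjugate_fin_two_of, Matrix.det_fin_two_of, Ring.inverse_eq_inv]
  funext i
  fin_cases i <;>
    simp [Matrix.mulVec, dotProduct, Fin.sum_univ_two, Matrix.smul_apply] <;>
    field_simp <;> ring

lemma UD_identity (caa cab cbb rα rβ δ p q x y v0 v1 : ℝ)
    (h1 : 2*(caa*v0 + cab*v1) = (1-δ)*rα) (h2 : 2*(cab*v0 + cbb*v1) = (1-δ)*rβ) :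
    ((1-δ)*(rα*(p+v0)+rβ*(q+v1)) - (caa*v0^2+2*cab*v0*v1+cbb*v1^2))
      - ((1-δ)*(rα*x+rβ*y) - (caa*(x-p)^2+2*cab*(x-p)*(y-q)+cbb*(y-q)^2))
      = caa*(p+v0-x)^2 + 2*cab*(p+v0-x)*(q+v1-y) + cbb*(q+v1-y)^2 := by
  linear_combination (x - p - v0) * h1 + (y - q - v1) * h2

lemma UG_identity (caa cab cbb rα rβ δ p q a0 a1 : ℝ)
    (h1 : 2*(caa*a0 + cab*a1) = δ*rα) (h2 : 2*(cab*a0 + cbb*a1) = δ*rβ) :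
    (δ*(rα*a0 + rβ*a1) - (caa*a0^2+2*cab*a0*a1+cbb*a1^2))
      - (δ*(rα*p + rβ*q) - (caa*p^2+2*cab*p*q+cbb*q^2))
      = caa*(p-a0)^2 + 2*cab*(p-a0)*(q-a1) + cbb*(q-a1)^2 := by
  linear_combination (p - a0) * h1 + (q - a1) * h2

lemma solve_pair (caa cab cbb s t : ℝ) (hD : caa*cbb - cab*cab ≠ 0) :
    2*(caa*((cbb*s - cab*t)/(2*(caa*cbb - cab*cab))) + cab*((caa*t - cab*s)/(2*(caa*cbb - cab*cab)))) = s ∧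
    2*(cab*((cbb*s - cab*t)/(2*(caa*cbb - cab*cab))) + cbb*((caa*t - cab*s)/(2*(caa*cbb - cab*cab)))) = t := by
  constructor <;> simp only [mul_div_assoc', ← add_div] <;> rw [div_eq_iff (mul_ne_zero two_ne_zero hD)] <;> ring

lemma PD_nonneg (caa cab cbb d0 d1 : ℝ) (hcaa : 0 < caa) (hD : 0 < caa*cbb - cab*cab) :
    0 ≤ caa*d0^2 + 2*cab*d0*d1 + cbb*d1^2 := by
  nlinarith [sq_nonneg (caa*d0 + cab*d1), mul_nonneg hD.le (sq_nonneg d1), hcaa]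

lemma PD_zero (caa cab cbb d0 d1 : ℝ) (hcaa : 0 < caa) (hD : 0 < caa*cbb - cab*cab)
    (h : caa*d0^2 + 2*cab*d0*d1 + cbb*d1^2 ≤ 0) : d0 = 0 ∧ d1 = 0 := by
  have h2 : (caa*cbb - cab*cab)*d1^2 ≤ 0 := by nlinarith [sq_nonneg (caa*d0 + cab*d1)]
  have h3 : d1^2 ≤ 0 := by
    by_contra hcon; push_neg at hcon
    exact absurd h2 (not_le.mpr (mul_pos hD hcon))
  have hd1 : d1 = 0 := by
    have := le_antisymm h3 (sq_nonneg d1)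
    exact pow_eq_zero_iff two_ne_zero |>.mp this
  subst hd1
  have hd0 : d0 = 0 := by
    have h4 : d0^2 ≤ 0 := by nlinarith
    have := le_antisymm h4 (sq_nonneg d0)
    exact pow_eq_zero_iff two_ne_zero |>.mp this
  exact ⟨hd0, rfl⟩

/- sqrt trick: if InvCond's sqrt part holds but det ≤ 0 then cab < 0 -/
lemma neg_offdiag (caa cab cbb : ℝ) (hs : cab < Real.sqrt (caa*cbb))
    (hcon : caa*cbb - cab*cab ≤ 0) : cab < 0 := by
  by_contra hnn; push_neg at hnn
  have h1 : Real.sqrt (caa*cbb) ≤ Real.sqrt (cab^2) := Real.sqrt_le_sqrt (by nlinarith)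
  rw [Real.sqrt_sq hnn] at h1; linarith

set_option maxHeartbeats 1600000 in
/-- If some minimally compliant pair `(γ0', γ1')` gives the generalist strictly more
utility than the no-regulation equilibrium `(γ0^A, γ1^A)`, then under regulation
`(0, θD)` with `0 ≤ θD < β1^A` every subgame perfect equilibrium outcome has safety
exactly `θD`; in particular the regulation backfires. -/
theorem minimal_compliance_implies_backfiring
    (c0aa c0bb c0ab c1aa c1bb c1ab rα rβ δ θD : ℝ)
    (hc0aa : 0 < c0aa) (hc0bb : 0 < c0bb) (hc1aa : 0 < c1aa) (hc1bb : 0 < c1bb)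
    (hrα : 0 < rα) (hrβ : 0 < rβ) (hδ0 : 0 < δ) (hδ1 : δ < 1)
    (hcond0 : InvCond c0aa c0ab c0bb rα rβ)
    (hcond1 : InvCond c1aa c1ab c1bb rα rβ)
    (hθD0 : 0 ≤ θD)
    (hθD1 : θD < gamma1A c0aa c0ab c0bb c1aa c1ab c1bb rα rβ δ 1)
    (γ0' γ1' : Fin 2 → ℝ) (hα0' : 0 ≤ γ0' 0) (hβ0' : 0 ≤ γ0' 1)
    (hfeas' : γ0' 0 ≤ γ1' 0 ∧ max (γ0' 1) θD ≤ γ1' 1)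
    (hmax' : ∀ γ : Fin 2 → ℝ, γ0' 0 ≤ γ 0 → max (γ0' 1) θD ≤ γ 1 →
      UD c1aa c1ab c1bb rα rβ δ γ0' γ ≤ UD c1aa c1ab c1bb rα rβ δ γ0' γ1')
    (hmincomp : γ1' 1 = θD)
    (hbetter : UG c0aa c0ab c0bb rα rβ δ (gamma0A c0aa c0ab c0bb rα rβ δ)
        (gamma1A c0aa c0ab c0bb c1aa c1ab c1bb rα rβ δ) <
      UG c0aa c0ab c0bb rα rβ δ γ0' γ1') :
    ∀ (b : (Fin 2 → ℝ) → (Fin 2 → ℝ)) (γ0s : Fin 2 → ℝ),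
      IsSPE c0aa c0ab c0bb c1aa c1ab c1bb rα rβ δ 0 θD b γ0s →
      (b γ0s) 1 = θD ∧
      (b γ0s) 1 < gamma1A c0aa c0ab c0bb c1aa c1ab c1bb rα rβ δ 1 := by
  intro b γ0s hSPE
  obtain ⟨hb, hs0, hs1, hopt⟩ := hSPE
  -- unpack the investment conditions
  replace hcond0 : c0ab < min (Real.sqrt (c0aa * c0bb)) (min (c0aa * rβ / rα) (c0bb * rα / rβ)) := hcond0
  replace hcond1 : c1ab < min (Real.sqrt (c1aa * c1bb)) (min (c1aa * rβ / rα) (c1bb * rα / rβ)) := hcond1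
  have h0s : c0ab < Real.sqrt (c0aa * c0bb) := lt_of_lt_of_le hcond0 (min_le_left _ _)
  have h1s : c1ab < Real.sqrt (c1aa * c1bb) := lt_of_lt_of_le hcond1 (min_le_left _ _)
  have h1a : c1ab * rα < c1aa * rβ :=
    (lt_div_iff₀ hrα).mp (lt_of_lt_of_le hcond1 ((min_le_right _ _).trans (min_le_left _ _)))
  have h1b : c1ab * rβ < c1bb * rα :=
    (lt_div_iff₀ hrβ).mp (lt_of_lt_of_le hcond1 ((min_le_right _ _).trans (min_le_right _ _)))
  have hδ1' : (0:ℝ) < 1 - δ := by linarith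
  -- D1 > 0, using boundedness of the specialist's problem in the SPE
  have hD1 : 0 < c1aa*c1bb - c1ab*c1ab := by
    by_contra hcon; push_neg at hcon
    have hneg : c1ab < 0 := neg_offdiag c1aa c1ab c1bb h1s hcon
    obtain ⟨hf0', hopt0⟩ := hb (fun _ => (0:ℝ))
    set M := UD c1aa c1ab c1bb rα rβ δ (fun _ => (0:ℝ)) (b (fun _ => (0:ℝ))) with hM
    clear_value M
    have hc : 0 < (1-δ)*(rα*c1bb + rβ*(-c1ab)) :=
      mul_pos hδ1' (by nlinarith only [mul_pos hrα hc1bb, mul_pos hrβ (neg_pos.mpr hneg)])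
    set t := max (θD/(-c1ab)) ((|M|+1)/((1-δ)*(rα*c1bb + rβ*(-c1ab)))) with ht
    clear_value t
    have ht2 : (|M|+1)/((1-δ)*(rα*c1bb + rβ*(-c1ab))) ≤ t := by rw [ht]; exact le_max_right _ _
    have htc : |M|+1 ≤ t*((1-δ)*(rα*c1bb + rβ*(-c1ab))) := (div_le_iff₀ hc).mp ht2
    have ht0 : 0 ≤ t := le_trans (le_of_lt (div_pos (by positivity) hc)) ht2
    have htθ : θD ≤ t*(-c1ab) := by
      refine (div_le_iff₀ (neg_pos.mpr hneg)).mp ?_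
      rw [ht]; exact le_max_left _ _
    have hfe0 : (fun _ => (0:ℝ)) 0 ≤ (![t*c1bb, t*(-c1ab)] : Fin 2 → ℝ) 0 := by
      simp only [Matrix.cons_val_zero]
      exact mul_nonneg ht0 hc1bb.le
    have hfe1 : max ((fun _ => (0:ℝ)) 1) θD ≤ (![t*c1bb, t*(-c1ab)] : Fin 2 → ℝ) 1 := by
      simp only [Matrix.cons_val_one, Matrix.head_cons]
      exact max_le (mul_nonneg ht0 (by linarith)) htθ
    have hkey := hopt0 (![t*c1bb, t*(-c1ab)]) hfe0 hfe1
    rw [UD_eval c1aa c1ab c1bb rα rβ δ (fun _ => (0:ℝ)) (![t*c1bb, t*(-c1ab)])] at hkey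
    simp only [Matrix.cons_val_zero, Matrix.cons_val_one, Matrix.head_cons] at hkey
    have hquad : c1aa*(t*c1bb - 0)^2 + 2*c1ab*(t*c1bb - 0)*(t*(-c1ab) - 0) + c1bb*(t*(-c1ab) - 0)^2 ≤ 0 := by
      nlinarith only [mul_nonneg hc1bb.le (sq_nonneg t), hcon]
    linarith only [hkey, htc, hquad, le_abs_self M]
  -- D0 > 0, using boundedness of the generalist's problem in the SPE
  have hD0 : 0 < c0aa*c0bb - c0ab*c0ab := by
    by_contra hcon; push_neg at hcon
    have hneg : c0ab < 0 := neg_offdiag c0aa c0ab c0bb h0s hcon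
    set M := UG c0aa c0ab c0bb rα rβ δ γ0s (b γ0s) with hM
    clear_value M
    have hc : 0 < δ*(rα*c0bb + rβ*(-c0ab)) :=
      mul_pos hδ0 (by nlinarith only [mul_pos hrα hc0bb, mul_pos hrβ (neg_pos.mpr hneg)])
    set t := max 0 ((|M|+1)/(δ*(rα*c0bb + rβ*(-c0ab)))) with ht
    clear_value t
    have ht2 : (|M|+1)/(δ*(rα*c0bb + rβ*(-c0ab))) ≤ t := by rw [ht]; exact le_max_right _ _
    have htc : |M|+1 ≤ t*(δ*(rα*c0bb + rβ*(-c0ab))) := (div_le_iff₀ hc).mp ht2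
    have ht0 : 0 ≤ t := by rw [ht]; exact le_max_left _ _
    have hfe0 : (0:ℝ) ≤ (![t*c0bb, t*(-c0ab)] : Fin 2 → ℝ) 0 := by
      simp only [Matrix.cons_val_zero]; exact mul_nonneg ht0 hc0bb.le
    have hfe1 : (0:ℝ) ≤ (![t*c0bb, t*(-c0ab)] : Fin 2 → ℝ) 1 := by
      simp only [Matrix.cons_val_one, Matrix.head_cons]
      exact mul_nonneg ht0 (by linarith)
    have hkey := hopt (![t*c0bb, t*(-c0ab)]) hfe0 hfe1
    obtain ⟨hbf0, hbf1⟩ := (hb (![t*c0bb, t*(-c0ab)])).1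
    simp only [Matrix.cons_val_zero, Matrix.cons_val_one, Matrix.head_cons] at hbf0 hbf1
    have hbf1' : t*(-c0ab) ≤ b (![t*c0bb, t*(-c0ab)]) 1 := le_trans (le_max_left _ _) hbf1
    rw [UG_eval c0aa c0ab c0bb rα rβ δ (![t*c0bb, t*(-c0ab)]) (b (![t*c0bb, t*(-c0ab)]))] at hkey
    simp only [Matrix.cons_val_zero, Matrix.cons_val_one, Matrix.head_cons] at hkey
    have hquad : c0aa*(t*c0bb)^2 + 2*c0ab*(t*c0bb)*(t*(-c0ab)) + c0bb*(t*(-c0ab))^2 ≤ 0 := by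
      nlinarith only [mul_nonneg hc0bb.le (sq_nonneg t), hcon]
    have hmono0 : δ*rα*(t*c0bb) ≤ δ*rα*(b (![t*c0bb, t*(-c0ab)]) 0) :=
      mul_le_mul_of_nonneg_left hbf0 (by positivity)
    have hmono1 : δ*rβ*(t*(-c0ab)) ≤ δ*rβ*(b (![t*c0bb, t*(-c0ab)]) 1) :=
      mul_le_mul_of_nonneg_left hbf1' (by positivity)
    linarith only [hkey, htc, hquad, le_abs_self M, hmono0, hmono1]
  have hD1' : c1aa*c1bb - c1ab*c1ab ≠ 0 := ne_of_gt hD1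
  have hD0' : c0aa*c0bb - c0ab*c0ab ≠ 0 := ne_of_gt hD0
  -- the interior best-response increment v and the no-regulation strategy a
  have hveq := solve_pair c1aa c1ab c1bb ((1-δ)*rα) ((1-δ)*rβ) hD1'
  have haeq := solve_pair c0aa c0ab c0bb (δ*rα) (δ*rβ) hD0'
  set v0 := (c1bb*((1-δ)*rα) - c1ab*((1-δ)*rβ))/(2*(c1aa*c1bb - c1ab*c1ab)) with hv0d
  set v1 := (c1aa*((1-δ)*rβ) - c1ab*((1-δ)*rα))/(2*(c1aa*c1bb - c1ab*c1ab)) with hv1d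
  set a0 := (c0bb*(δ*rα) - c0ab*(δ*rβ))/(2*(c0aa*c0bb - c0ab*c0ab)) with ha0d
  set a1 := (c0aa*(δ*rβ) - c0ab*(δ*rα))/(2*(c0aa*c0bb - c0ab*c0ab)) with ha1d
  clear_value v0 v1 a0 a1
  have hv0pos : 0 < v0 := by
    rw [hv0d]; exact div_pos (by nlinarith only [mul_pos hδ1' (sub_pos.mpr h1b)]) (by linarith only [hD1])
  have hv1pos : 0 < v1 := by
    rw [hv1d]; exact div_pos (by nlinarith only [mul_pos hδ1' (sub_pos.mpr h1a)]) (by linarith only [hD1])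
  -- coordinates of gamma0A and gamma1A
  have hg0A0 : gamma0A c0aa c0ab c0bb rα rβ δ 0 = a0 := by
    unfold gamma0A
    rw [invVec c0aa c0ab c0bb rα rβ hD0']
    simp only [Pi.smul_apply, Matrix.cons_val_zero, smul_eq_mul]
    rw [ha0d]; field_simp
  have hg0A1 : gamma0A c0aa c0ab c0bb rα rβ δ 1 = a1 := by
    unfold gamma0A
    rw [invVec c0aa c0ab c0bb rα rβ hD0']
    simp only [Pi.smul_apply, Matrix.cons_val_one, Matrix.head_cons, Matrix.cons_val_zero, smul_eq_mul]
    rw [ha1d]; field_simp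
  have hg1A0 : gamma1A c0aa c0ab c0bb c1aa c1ab c1bb rα rβ δ 0 = a0 + v0 := by
    unfold gamma1A
    rw [invVec c1aa c1ab c1bb rα rβ hD1']
    simp only [Pi.add_apply, Pi.smul_apply, Matrix.cons_val_zero, smul_eq_mul]
    rw [hg0A0, hv0d]
    have : (1 - δ) / 2 * ((c1bb * rα - c1ab * rβ) / (c1aa * c1bb - c1ab * c1ab))
        = (c1bb*((1-δ)*rα) - c1ab*((1-δ)*rβ))/(2*(c1aa*c1bb - c1ab*c1ab)) := by
      field_simp
    linarith [this]
  have hg1A1 : gamma1A c0aa c0ab c0bb c1aa c1ab c1bb rα rβ δ 1 = a1 + v1 := by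
    unfold gamma1A
    rw [invVec c1aa c1ab c1bb rα rβ hD1']
    simp only [Pi.add_apply, Pi.smul_apply, Matrix.cons_val_one, Matrix.head_cons, Matrix.cons_val_zero, smul_eq_mul]
    rw [hg0A1, hv1d]
    have : (1 - δ) / 2 * ((c1aa * rβ - c1ab * rα) / (c1aa * c1bb - c1ab * c1ab))
        = (c1aa*((1-δ)*rβ) - c1ab*((1-δ)*rα))/(2*(c1aa*c1bb - c1ab*c1ab)) := by
      field_simp
    linarith [this]
  -- scalar form of hbetter
  rw [UG_eval c0aa c0ab c0bb rα rβ δ (gamma0A c0aa c0ab c0bb rα rβ δ)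
      (gamma1A c0aa c0ab c0bb c1aa c1ab c1bb rα rβ δ),
    UG_eval c0aa c0ab c0bb rα rβ δ γ0' γ1', hg0A0, hg0A1, hg1A0, hg1A1] at hbetter
  -- the specialist's best response to γ0' is γ1'
  obtain ⟨hfB', hoptB'⟩ := hb γ0'
  have hle1 : UD c1aa c1ab c1bb rα rβ δ γ0' (b γ0') ≤ UD c1aa c1ab c1bb rα rβ δ γ0' γ1' :=
    hmax' (b γ0') hfB'.1 hfB'.2
  have hle2 : UD c1aa c1ab c1bb rα rβ δ γ0' γ1' ≤ UD c1aa c1ab c1bb rα rβ δ γ0' (b γ0') :=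
    hoptB' γ1' hfeas'.1 hfeas'.2
  have hMfe0 : γ0' 0 ≤ (![(γ1' 0 + b γ0' 0)/2, (γ1' 1 + b γ0' 1)/2] : Fin 2 → ℝ) 0 := by
    simp only [Matrix.cons_val_zero]; linarith [hfeas'.1, hfB'.1]
  have hMfe1 : max (γ0' 1) θD ≤ (![(γ1' 0 + b γ0' 0)/2, (γ1' 1 + b γ0' 1)/2] : Fin 2 → ℝ) 1 := by
    simp only [Matrix.cons_val_one, Matrix.head_cons, Matrix.cons_val_zero]; linarith [hfeas'.2, hfB'.2]
  have hMle := hmax' (![(γ1' 0 + b γ0' 0)/2, (γ1' 1 + b γ0' 1)/2]) hMfe0 hMfe1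
  rw [UD_eval c1aa c1ab c1bb rα rβ δ γ0' (![(γ1' 0 + b γ0' 0)/2, (γ1' 1 + b γ0' 1)/2]),
    UD_eval c1aa c1ab c1bb rα rβ δ γ0' γ1'] at hMle
  simp only [Matrix.cons_val_zero, Matrix.cons_val_one, Matrix.head_cons] at hMle
  rw [UD_eval c1aa c1ab c1bb rα rβ δ γ0' (b γ0'),
    UD_eval c1aa c1ab c1bb rα rβ δ γ0' γ1'] at hle1 hle2
  have hid1 := UD_identity c1aa c1ab c1bb rα rβ δ (γ0' 0) (γ0' 1) (γ1' 0) (γ1' 1) v0 v1 hveq.1 hveq.2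
  have hid2 := UD_identity c1aa c1ab c1bb rα rβ δ (γ0' 0) (γ0' 1) (b γ0' 0) (b γ0' 1) v0 v1 hveq.1 hveq.2
  have hid3 := UD_identity c1aa c1ab c1bb rα rβ δ (γ0' 0) (γ0' 1)
      ((γ1' 0 + b γ0' 0)/2) ((γ1' 1 + b γ0' 1)/2) v0 v1 hveq.1 hveq.2
  have hQle : c1aa*(b γ0' 0 - γ1' 0)^2 + 2*c1ab*(b γ0' 0 - γ1' 0)*(b γ0' 1 - γ1' 1)
      + c1bb*(b γ0' 1 - γ1' 1)^2 ≤ 0 := by linarith only [hid1, hid2, hid3, hle1, hle2, hMle]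
  obtain ⟨he0, he1⟩ := PD_zero c1aa c1ab c1bb _ _ hc1aa hD1 hQle
  have hB'0 : b γ0' 0 = γ1' 0 := by linarith
  have hB'1 : b γ0' 1 = γ1' 1 := by linarith
  -- generalist optimality applied to γ0'
  have hopt' := hopt γ0' hα0' hβ0'
  rw [UG_eval c0aa c0ab c0bb rα rβ δ γ0' (b γ0'),
    UG_eval c0aa c0ab c0bb rα rβ δ γ0s (b γ0s), hB'0, hB'1] at hopt'
  -- facts about b γ0s
  obtain ⟨hfs, hopts⟩ := hb γ0s
  have hBge : θD ≤ b γ0s 1 := le_trans (le_max_right _ _) hfs.2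
  have hmain : b γ0s 1 = θD := by
    by_contra hne
    have hBgt : θD < b γ0s 1 := lt_of_le_of_ne hBge (Ne.symm hne)
    -- show b γ0s = γ0s + v
    have hidB := UD_identity c1aa c1ab c1bb rα rβ δ (γ0s 0) (γ0s 1) (b γ0s 0) (b γ0s 1) v0 v1 hveq.1 hveq.2
    have hB : b γ0s 0 = γ0s 0 + v0 ∧ b γ0s 1 = γ0s 1 + v1 := by
      rcases le_or_gt θD (γ0s 1 + v1) with hP | hP
      · have hf0 : γ0s 0 ≤ (![γ0s 0 + v0, γ0s 1 + v1] : Fin 2 → ℝ) 0 := by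
          simp only [Matrix.cons_val_zero]; linarith
        have hf1 : max (γ0s 1) θD ≤ (![γ0s 0 + v0, γ0s 1 + v1] : Fin 2 → ℝ) 1 := by
          simp only [Matrix.cons_val_one, Matrix.head_cons, Matrix.cons_val_zero]
          exact max_le (by linarith) hP
        have hle := hopts (![γ0s 0 + v0, γ0s 1 + v1]) hf0 hf1
        rw [UD_eval c1aa c1ab c1bb rα rβ δ γ0s (![γ0s 0 + v0, γ0s 1 + v1]),
          UD_eval c1aa c1ab c1bb rα rβ δ γ0s (b γ0s)] at hle
        simp only [Matrix.cons_val_zero, Matrix.cons_val_one, Matrix.head_cons] at hle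
        have hidP := UD_identity c1aa c1ab c1bb rα rβ δ (γ0s 0) (γ0s 1)
            (γ0s 0 + v0) (γ0s 1 + v1) v0 v1 hveq.1 hveq.2
        have hQ : c1aa*(γ0s 0 + v0 - b γ0s 0)^2
            + 2*c1ab*(γ0s 0 + v0 - b γ0s 0)*(γ0s 1 + v1 - b γ0s 1)
            + c1bb*(γ0s 1 + v1 - b γ0s 1)^2 ≤ 0 := by
          linarith only [hidB, hidP, hle]
        obtain ⟨h0, h1⟩ := PD_zero c1aa c1ab c1bb _ _ hc1aa hD1 hQ
        constructor <;> linarith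
      · exfalso
        have hy : γ0s 1 < θD := by linarith
        have hden : 0 < b γ0s 1 - (γ0s 1 + v1) := by linarith
        set tt := (b γ0s 1 - θD)/(b γ0s 1 - (γ0s 1 + v1)) with htt
        clear_value tt
        have htt0 : 0 < tt := by rw [htt]; exact div_pos (by linarith) hden
        have htt1 : tt ≤ 1 := by rw [htt, div_le_one hden]; linarith only [hP]
        have hθeq : b γ0s 1 + tt*((γ0s 1 + v1) - b γ0s 1) = θD := by
          rw [htt]; field_simp; ring
        have hf0 : γ0s 0 ≤ (![b γ0s 0 + tt*((γ0s 0 + v0) - b γ0s 0),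
            b γ0s 1 + tt*((γ0s 1 + v1) - b γ0s 1)] : Fin 2 → ℝ) 0 := by
          simp only [Matrix.cons_val_zero]
          linarith only [mul_nonneg (by linarith only [htt1] : (0:ℝ) ≤ 1 - tt)
            (by linarith only [hfs.1] : (0:ℝ) ≤ b γ0s 0 - γ0s 0),
            mul_nonneg htt0.le hv0pos.le]
        have hf1 : max (γ0s 1) θD ≤ (![b γ0s 0 + tt*((γ0s 0 + v0) - b γ0s 0),
            b γ0s 1 + tt*((γ0s 1 + v1) - b γ0s 1)] : Fin 2 → ℝ) 1 := by
          simp only [Matrix.cons_val_one, Matrix.head_cons, Matrix.cons_val_zero, hθeq]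
          exact max_le hy.le le_rfl
        have hle := hopts _ hf0 hf1
        rw [UD_eval c1aa c1ab c1bb rα rβ δ γ0s (![b γ0s 0 + tt*((γ0s 0 + v0) - b γ0s 0),
            b γ0s 1 + tt*((γ0s 1 + v1) - b γ0s 1)]),
          UD_eval c1aa c1ab c1bb rα rβ δ γ0s (b γ0s)] at hle
        simp only [Matrix.cons_val_zero, Matrix.cons_val_one, Matrix.head_cons] at hle
        have hidM := UD_identity c1aa c1ab c1bb rα rβ δ (γ0s 0) (γ0s 1)
            (b γ0s 0 + tt*((γ0s 0 + v0) - b γ0s 0))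
            (b γ0s 1 + tt*((γ0s 1 + v1) - b γ0s 1)) v0 v1 hveq.1 hveq.2
        have hqB_le : c1aa*(γ0s 0 + v0 - b γ0s 0)^2
            + 2*c1ab*(γ0s 0 + v0 - b γ0s 0)*(γ0s 1 + v1 - b γ0s 1)
            + c1bb*(γ0s 1 + v1 - b γ0s 1)^2 ≤ 0 := by
          by_contra hq; push_neg at hq
          have h2 : 0 < tt*(2 - tt) := mul_pos htt0 (by linarith)
          linarith only [hidB, hidM, hle, mul_pos h2 hq]
        obtain ⟨h0, h1⟩ := PD_zero c1aa c1ab c1bb _ _ hc1aa hD1 hqB_le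
        linarith
    -- UG chain contradiction
    rw [hB.1, hB.2] at hopt'
    have hUG := UG_identity c0aa c0ab c0bb rα rβ δ (γ0s 0) (γ0s 1) a0 a1 haeq.1 haeq.2
    have hQpos := PD_nonneg c0aa c0ab c0bb (γ0s 0 - a0) (γ0s 1 - a1) hc0aa hD0
    linarith only [hbetter, hopt', hUG, hQpos]
  refine ⟨hmain, ?_⟩
  rw [hmain]
  exact hθD1
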